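/- Let β_max = √(12 − 4√6). Then 2β_max² − β_max⁴/12 = 4, and for every real β with 0 < β ≤ β_max and every real D̂ with 0 ≤ D̂ ≤ 1, every complex root ρ of the equation ρ² − 2ρ + 1 = −ρ(β² D̂ + (β² − β⁴/12) D̂²) satisfies |ρ| ≤ 1. -/

import Mathlib

/-- Roots of `ρ² − aρ + 1 = 0` with real `a`, `a² ≤ 4`, lie on the unit circle. -/
lemma quad_root_abs_le (a : ℝ) (ha : a ^ 2 ≤ 4) (ρ : ℂ)
    (h : ρ ^ 2 - (a : ℂ) * ρ + 1 = 0) : ‖ρ‖ ≤ 1 := by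
  set x := ρ.re
  set y := ρ.im
  have hre : x ^ 2 - y ^ 2 - a * x + 1 = 0 := by
    have := congrArg Complex.re h
    simpa [Complex.ext_iff, pow_two, Complex.mul_re, Complex.mul_im, x, y] using this
  have him : y * (2 * x - a) = 0 := by
    have := congrArg Complex.im h
    simp [Complex.ext_iff, pow_two, Complex.mul_re, Complex.mul_im, x, y] at this
    ring_nf
    ring_nf at this
    linarith
  have hsq : x ^ 2 + y ^ 2 ≤ 1 := by
    rcases mul_eq_zero.mp him with hy | hx
    · have hy2 : y ^ 2 = 0 := by rw [hy]; ring
      have hE : x ^ 2 - a * x + 1 = 0 := by linarith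
      have h4 : a ^ 2 = 4 := by nlinarith [sq_nonneg (2 * x - a)]
      have h0 : (2 * x - a) ^ 2 = 0 := by nlinarith
      have hxa : 2 * x - a = 0 := by
        exact pow_eq_zero_iff (n := 2) (by norm_num) |>.mp h0
      nlinarith
    · have hxa : 2 * x = a := by linarith
      have hax : a * x = 2 * x ^ 2 := by rw [← hxa]; ring
      linarith
  have habs : ‖ρ‖ ^ 2 ≤ 1 := by
    rw [Complex.sq_norm, Complex.normSq_apply]
    simpa [pow_two] using hsq
  nlinarith [norm_nonneg ρ]

theorem stmt_16 :
    2 * Real.sqrt (12 - 4 * Real.sqrt 6) ^ 2 - Real.sqrt (12 - 4 * Real.sqrt 6) ^ 4 / 12 = 4 ∧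
    ∀ β : ℝ, 0 < β → β ≤ Real.sqrt (12 - 4 * Real.sqrt 6) →
      ∀ D : ℝ, 0 ≤ D → D ≤ 1 →
        ∀ ρ : ℂ, ρ ^ 2 - 2 * ρ + 1 =
            -ρ * ((β ^ 2 * D + (β ^ 2 - β ^ 4 / 12) * D ^ 2 : ℝ) : ℂ) →
          ‖ρ‖ ≤ 1 := by
  have hs6 : Real.sqrt 6 ^ 2 = 6 := Real.sq_sqrt (by norm_num)
  have hs6nn : (0:ℝ) ≤ Real.sqrt 6 := Real.sqrt_nonneg 6
  have hs6le : Real.sqrt 6 ≤ 3 := by nlinarith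
  have harg : (0:ℝ) ≤ 12 - 4 * Real.sqrt 6 := by linarith
  have ht2 : Real.sqrt (12 - 4 * Real.sqrt 6) ^ 2 = 12 - 4 * Real.sqrt 6 :=
    Real.sq_sqrt harg
  have h4pow : Real.sqrt (12 - 4 * Real.sqrt 6) ^ 4 = (12 - 4 * Real.sqrt 6) ^ 2 := by
    rw [show Real.sqrt (12 - 4 * Real.sqrt 6) ^ 4 =
      (Real.sqrt (12 - 4 * Real.sqrt 6) ^ 2) ^ 2 by ring, ht2]
  have hfirst : 2 * Real.sqrt (12 - 4 * Real.sqrt 6) ^ 2 -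
      Real.sqrt (12 - 4 * Real.sqrt 6) ^ 4 / 12 = 4 := by
    rw [ht2, h4pow]; nlinarith
  refine ⟨hfirst, ?_⟩
  intro β hβ hβle D hD0 hD1 ρ h
  set c : ℝ := β ^ 2 * D + (β ^ 2 - β ^ 4 / 12) * D ^ 2 with hc
  have hb2 : β ^ 2 ≤ 12 - 4 * Real.sqrt 6 := by
    have := Real.sqrt_nonneg (12 - 4 * Real.sqrt 6)
    nlinarith
  have hcoef : 0 ≤ β ^ 2 - β ^ 4 / 12 := by nlinarith [sq_nonneg β]
  have hc0 : 0 ≤ c := by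
    rw [hc]
    have h1 : 0 ≤ β ^ 2 * D := by positivity
    have h2 : 0 ≤ (β ^ 2 - β ^ 4 / 12) * D ^ 2 := mul_nonneg hcoef (sq_nonneg D)
    linarith
  have hc4 : c ≤ 4 := by
    rw [hc]
    have hmul : 0 ≤ ((12 - 4 * Real.sqrt 6) - β ^ 2) * ((12 + 4 * Real.sqrt 6) - β ^ 2) := by
      apply mul_nonneg <;> nlinarith [sq_nonneg β]
    have hD2 : D ^ 2 ≤ 1 := by nlinarith
    nlinarith [hmul, hs6, mul_nonneg (sub_nonneg.mpr hD1) (sq_nonneg β),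
      mul_nonneg (sub_nonneg.mpr hD2) hcoef]
  have ha : (2 - c) ^ 2 ≤ 4 := by nlinarith
  apply quad_root_abs_le (2 - c) ha
  push_cast at h ⊢
  linear_combination h
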